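/- Let G be a torsion-free group in which every abelian subgroup is cyclic, and let φ : ℤ × ℤ → G be a group homomorphism. Then the kernel of φ contains a primitive element of ℤ × ℤ, i.e. a nonzero element (p,q) with gcd(p,q) = 1. -/

import Mathlib

/-- Old Mathlib definition (removed upstream): a monoid is torsion-free if no nontrivial
element has finite order. -/
def Monoid.IsTorsionFree (G : Type*) [Monoid G] : Prop :=
  ∀ g : G, g ≠ 1 → ¬IsOfFinOrder g

/-- If `G` is torsion-free and every abelian subgroup of `G` is cyclic, then the kernel of
any group homomorphism `ℤ × ℤ → G` contains a primitive element `(p,q)`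
(nonzero with coprime coordinates). -/
theorem stmt_3 {G : Type*} [Group G]
    (htf : Monoid.IsTorsionFree G)
    (hcyc : ∀ H : Subgroup G, (∀ x ∈ H, ∀ y ∈ H, x * y = y * x) → IsCyclic H)
    (φ : Multiplicative (ℤ × ℤ) →* G) :
    ∃ p q : ℤ, (p, q) ≠ (0, 0) ∧ Int.gcd p q = 1 ∧
      Multiplicative.ofAdd ((p, q) : ℤ × ℤ) ∈ φ.ker := by
  set a : G := φ (Multiplicative.ofAdd ((1, 0) : ℤ × ℤ)) with ha
  set b : G := φ (Multiplicative.ofAdd ((0, 1) : ℤ × ℤ)) with hb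
  have key : ∀ p q : ℤ, φ (Multiplicative.ofAdd ((p, q) : ℤ × ℤ)) = a ^ p * b ^ q := by
    intro p q
    have h1 : ((p, q) : ℤ × ℤ) = p • ((1, 0) : ℤ × ℤ) + q • ((0, 1) : ℤ × ℤ) := by
      simp [Prod.ext_iff]
    rw [h1]
    simp only [ofAdd_add, ofAdd_zsmul, map_mul, map_zpow]
    rfl
  have hcomm : Commute a b := (Commute.all _ _).map φ
  set H : Subgroup G := Subgroup.closure {a, b} with hH
  have habmem : a ∈ H ∧ b ∈ H := by
    constructor <;> apply Subgroup.subset_closure <;> simp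
  have hHcomm : ∀ x ∈ H, ∀ y ∈ H, x * y = y * x := by
    intro x hx y hy
    induction hx, hy using Subgroup.closure_induction₂ with
    | mem u v hu hv =>
      rcases hu with rfl | rfl <;> rcases hv with rfl | rfl
      · rfl
      · exact hcomm
      · exact hcomm.symm
      · rfl
    | one_left u hu => simp
    | one_right u hu => simp
    | mul_left u v w hu hv hw h1 h2 => exact (Commute.mul_left h1 h2 : Commute _ _)
    | mul_right u v w hu hv hw h1 h2 => exact (Commute.mul_right h1 h2 : Commute _ _)
    | inv_left u v hu hv h => exact ((show Commute u v from h).inv_left : Commute _ _)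
    | inv_right u v hu hv h => exact ((show Commute u v from h).inv_right : Commute _ _)
  obtain ⟨⟨c, hcmem⟩, hc⟩ := (hcyc H hHcomm).exists_generator
  obtain ⟨m, hm⟩ := hc ⟨a, habmem.1⟩
  obtain ⟨n, hn⟩ := hc ⟨b, habmem.2⟩
  have hma : c ^ m = a := congrArg Subtype.val hm
  have hnb : c ^ n = b := congrArg Subtype.val hn
  by_cases h0 : m = 0 ∧ n = 0
  · refine ⟨1, 0, by simp, by simp, ?_⟩
    have : a = 1 := by rw [← hma, h0.1, zpow_zero]
    simpa [MonoidHom.mem_ker] using this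
  · set g : ℤ := (Int.gcd m n : ℤ) with hg
    have hgpos : 0 < Int.gcd m n := by
      rcases not_and_or.mp h0 with h | h
      · exact Int.gcd_pos_of_ne_zero_left n h
      · exact Int.gcd_pos_of_ne_zero_right m h
    have hdm : g ∣ m := Int.gcd_dvd_left m n
    have hdn : g ∣ n := Int.gcd_dvd_right m n
    refine ⟨n / g, -(m / g), ?_, ?_, ?_⟩
    · intro hpq
      rw [Prod.mk.injEq] at hpq
      have hm0 : m = 0 := by
        have := hpq.2
        have : m / g = 0 := by omega
        have := Int.ediv_mul_cancel hdm
        rw [‹m / g = 0›] at this; simpa using this.symm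
      have hn0 : n = 0 := by
        have : n / g = 0 := hpq.1
        have h2 := Int.ediv_mul_cancel hdn
        rw [this] at h2; simpa using h2.symm
      simp [hm0, hn0] at hgpos
    · rw [Int.gcd_neg]
      rw [Int.gcd_comm]
      exact Int.gcd_div_gcd_div_gcd hgpos
    · rw [MonoidHom.mem_ker, key, ← hma, ← hnb, ← zpow_mul, ← zpow_mul, ← zpow_add]
      have : m * (n / g) + n * -(m / g) = 0 := by
        rw [mul_neg, ← Int.mul_ediv_assoc m hdn, ← Int.mul_ediv_assoc n hdm, mul_comm n m]
        exact add_neg_cancel _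
      rw [this, zpow_zero]
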